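/- Let R = (K, φ) with K = L(δδ*) over Δ = {δ} and φ(δ) = {a, b} = Σ, so R = { Σⁱ | i ≥ 1 }. Then the point-wise complement { Σ* \ Σⁱ | i ≥ 1 } is not a rational set of regular languages. -/

import Mathlib

open Language

/-- A substitution mapping symbols to languages, extended multiplicatively to words. -/
def phiW {Δ A : Type} (φ : Δ → Language A) (w : List Δ) : Language A :=
  (w.map φ).prod

/-- Image of a language of words under the extended substitution. -/
def phiL {Δ A : Type} (φ : Δ → Language A) (L : Set (List Δ)) : Language A :=
  ⋃ w ∈ L, phiW φ w

/-- The set of languages generated by a generator language `K` and substitution `φ`. -/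
def RSet {Δ A : Type} (φ : Δ → Language A) (K : Language Δ) : Set (Language A) :=
  { L | ∃ w ∈ K, phiW φ w = L }

/-- Rational sets of regular languages. -/
def IsRSRL {A : Type} (R : Set (Language A)) : Prop :=
  ∃ (Δ : Type) (_ : Fintype Δ) (K : Language Δ) (φ : Δ → Language A),
    K.IsRegular ∧ ([] : List Δ) ∉ K ∧ (∀ δ, (φ δ).IsRegular) ∧ R = RSet φ K

/-- The complement of `Σⁱ`. -/
def CL (i : ℕ) : Language (Fin 2) :=
  ({ w : List (Fin 2) | w.length = i } : Language (Fin 2))ᶜ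

lemma mem_CL {w : List (Fin 2)} {i : ℕ} : w ∈ CL i ↔ w.length ≠ i := Iff.rfl

lemma CL_subset {i j : ℕ} (h : CL i ≤ CL j) : i = j := by
  by_contra hne
  have h1 : (List.replicate j (0 : Fin 2)) ∈ CL i := by
    simp [mem_CL]; omega
  have h2 := h h1
  exact h2 (by simp)

lemma phiW_append {Δ A : Type} (φ : Δ → Language A) (x y : List Δ) :
    phiW φ (x ++ y) = phiW φ x * phiW φ y := by
  simp [phiW, List.map_append, List.prod_append]

lemma nil_mem_phiW {Δ A : Type} (φ : Δ → Language A) (w : List Δ) :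
    ([] : List A) ∈ phiW φ w ↔ ∀ δ ∈ w, ([] : List A) ∈ φ δ := by
  induction w with
  | nil => simp [phiW]
  | cons d t ih =>
    simp only [phiW, List.map_cons, List.prod_cons]
    constructor
    · rintro h
      rw [Language.mem_mul] at h
      obtain ⟨a, ha, b, hb, hab⟩ := h
      rcases List.append_eq_nil_iff.1 hab with ⟨rfl, rfl⟩
      intro δ hδ
      rcases List.mem_cons.1 hδ with rfl | hδ
      · exact ha
      · exact (ih.1 hb) δ hδ
    · intro h
      rw [Language.mem_mul]
      exact ⟨[], h d List.mem_cons_self, [], ih.2 (fun δ hδ => h δ (List.mem_cons_of_mem _ hδ)), rfl⟩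

/-- For `R = { Σⁱ | i ≥ 1 }` over `Σ = {a,b}`, the point-wise complement
`{ Σ* \ Σⁱ | i ≥ 1 }` is not an RSRL. -/
theorem stmt11 :
    ¬ IsRSRL { L : Language (Fin 2) | ∃ i : ℕ, 1 ≤ i ∧
        L = ({ w : List (Fin 2) | w.length = i } : Language (Fin 2))ᶜ } := by
  classical
  rintro ⟨Δ, fΔ, K, φ, ⟨σ, fσ, M, hM⟩, hnil, hφreg, hR⟩
  set p := Fintype.card σ with hp
  -- every w ∈ K maps to some CL i
  have hmem : ∀ w ∈ K, ∃ i, 1 ≤ i ∧ phiW φ w = CL i := by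
    intro w hw
    have hmemR : phiW φ w ∈ RSet φ K := ⟨w, hw, rfl⟩
    rw [← hR] at hmemR
    obtain ⟨i, hi, hCi⟩ := hmemR
    exact ⟨i, hi, hCi⟩
  have hsur : ∀ i, 1 ≤ i → ∃ w ∈ K, phiW φ w = CL i := by
    intro i hi
    have : CL i ∈ { L : Language (Fin 2) | ∃ i : ℕ, 1 ≤ i ∧
        L = ({ w : List (Fin 2) | w.length = i } : Language (Fin 2))ᶜ } := ⟨i, hi, rfl⟩
    rw [hR] at this
    exact this
  -- the finitely many indices realized by short words
  have hT : {w : List Δ | w.length ≤ p}.Finite := List.finite_length_le Δ p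
  let g : List Δ → ℕ := fun w => if h : ∃ i, phiW φ w = CL i then h.choose else 0
  have hS : (g '' {w : List Δ | w.length ≤ p}).Finite := hT.image g
  obtain ⟨N, hN⟩ := hS.bddAbove
  set i := N + 1 with hidef
  have hi1 : 1 ≤ i := Nat.succ_le_succ (Nat.zero_le N)
  obtain ⟨w0, hw0K, hw0⟩ := hsur i hi1
  have hP : ∃ n, ∃ w, w ∈ K ∧ w.length = n ∧ phiW φ w = CL i :=
    ⟨w0.length, w0, hw0K, rfl, hw0⟩
  obtain ⟨w, hwK, hwlen, hwC⟩ := Nat.find_spec hP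
  -- w must be long
  have hlong : p ≤ w.length := by
    by_contra h
    push_neg at h
    have hwT : w ∈ {w : List Δ | w.length ≤ p} := le_of_lt h
    have hgw : g w = i := by
      have hex : ∃ j, phiW φ w = CL j := ⟨i, hwC⟩
      have hch := hex.choose_spec
      have hCC : CL hex.choose ≤ CL i := by rw [← hch, hwC]
      have := CL_subset hCC
      simp only [g, dif_pos hex, this]
    have hiS : i ∈ g '' {w : List Δ | w.length ≤ p} := ⟨w, hwT, hgw⟩
    have := hN hiS
    omega
  -- pump
  have hwacc : w ∈ M.accepts := by rw [hM]; exact hwK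
  obtain ⟨a, b, c, hx, hab, hbne, hsub⟩ := M.pumping_lemma hwacc hlong
  have hac : a ++ c ∈ K := by
    rw [← hM]
    apply hsub
    show a ++ c ∈ ({a} * KStar.kstar {b} * {c} : Language Δ)
    rw [Language.mem_mul]
    refine ⟨a ++ [], ?_, c, rfl, by simp⟩
    rw [Language.mem_mul]
    exact ⟨a, rfl, [], Language.nil_mem_kstar _, rfl⟩
  -- ε ∈ phiW φ b
  have hnili : ([] : List (Fin 2)) ∈ CL i := by simp [mem_CL]
  have hnilw : ([] : List (Fin 2)) ∈ phiW φ w := by rw [hwC]; exact hnili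
  have hall := (nil_mem_phiW φ w).1 hnilw
  have hnilb : ([] : List (Fin 2)) ∈ phiW φ b :=
    (nil_mem_phiW φ b).2 (fun δ hδ => hall δ (by rw [hx]; simp [hδ]))
  -- phiW (a ++ c) ⊆ phiW w
  obtain ⟨j, hj1, hjC⟩ := hmem (a ++ c) hac
  have hsubC : CL j ≤ CL i := by
    rw [← hjC, ← hwC, hx]
    intro u hu
    rw [phiW_append] at hu
    change u ∈ (phiW φ a * phiW φ c : Language (Fin 2)) at hu
    rw [Language.mem_mul] at hu
    obtain ⟨u1, hu1, u2, hu2, huu⟩ := hu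
    show u ∈ (phiW φ (a ++ b ++ c) : Language (Fin 2))
    rw [phiW_append, phiW_append, Language.mem_mul]
    refine ⟨u1 ++ [], ?_, u2, hu2, by simpa using huu⟩
    rw [Language.mem_mul]
    exact ⟨u1, hu1, [], hnilb, rfl⟩
  have hji : j = i := CL_subset hsubC
  have hmin : Nat.find hP ≤ (a ++ c).length :=
    Nat.find_min' hP ⟨a ++ c, hac, rfl, hji ▸ hjC⟩
  have hlt : (a ++ c).length < w.length := by
    rw [hx]
    simp only [List.length_append]
    have : 0 < b.length := List.length_pos_iff.2 hbne
    omega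
  omega
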